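/- Let Δ and Δ' = Δ + E be self-adjoint N×N complex matrices with ‖E‖ < 1, where ‖·‖ is the operator norm. Let L be a natural number and c_1, …, c_L ∈ ℂ, and define the filter G(Δ) := Σ_{l=1}^{L} c_l · C(Δ)^l, where C(Δ) := (Δ − iI)(Δ + iI)^{-1} is the Cayley transform. Then ‖G(Δ) − G(Δ')‖ ≤ (Σ_{l=1}^{L} l·|c_l|) · ( (‖Δ‖ + 1)·‖E‖/(1 − ‖E‖) + ‖E‖ ). -/

import Mathlib

open scoped Matrix.Norms.L2Operator

noncomputable instance (N : ℕ) : CStarAlgebra (Matrix (Fin N) (Fin N) ℂ) := { }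

/-- The Cayley transform of a matrix: `C(Δ) = (Δ - i I) (Δ + i I)⁻¹`. -/
noncomputable def cayleyTransform {N : ℕ} (Δ : Matrix (Fin N) (Fin N) ℂ) :
    Matrix (Fin N) (Fin N) ℂ :=
  (Δ - Complex.I • 1) * (Δ + Complex.I • 1)⁻¹

lemma aux_isUnit {N : ℕ} (Δ : Matrix (Fin N) (Fin N) ℂ) (hΔ : IsSelfAdjoint Δ) :
    IsUnit (Δ + Complex.I • 1) := by
  have h : (-Complex.I) ∉ spectrum ℂ Δ := by
    intro hmem
    have := hΔ.mem_spectrum_eq_re hmem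
    simp [Complex.ext_iff] at this
  have h2 := spectrum.notMem_iff.mp h
  rw [Algebra.algebraMap_eq_smul_one] at h2
  have h3 : (-Complex.I) • (1 : Matrix (Fin N) (Fin N) ℂ) - Δ = -(Δ + Complex.I • 1) := by
    rw [neg_smul]; abel
  rw [h3] at h2
  simpa using h2.neg

lemma aux_star_add {N : ℕ} (Δ : Matrix (Fin N) (Fin N) ℂ) (hΔ : IsSelfAdjoint Δ) :
    star (Δ + Complex.I • 1) = Δ - Complex.I • 1 := by
  rw [star_add, hΔ.star_eq, star_smul, star_one, Complex.star_def, Complex.conj_I, neg_smul,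
    sub_eq_add_neg]

lemma aux_comm {N : ℕ} (Δ : Matrix (Fin N) (Fin N) ℂ) :
    (Δ + Complex.I • 1) * (Δ - Complex.I • 1) = (Δ - Complex.I • 1) * (Δ + Complex.I • 1) := by
  have h1 : Commute Δ (Complex.I • (1 : Matrix (Fin N) (Fin N) ℂ)) :=
    (Commute.one_right Δ).smul_right _
  exact (((Commute.refl Δ).add_left h1.symm).sub_right
    ((h1.add_left (Commute.refl _)))).eq

lemma aux_norm_one_le {N : ℕ} : ‖(1 : Matrix (Fin N) (Fin N) ℂ)‖ ≤ 1 := by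
  rw [Matrix.cstar_norm_def, map_one]
  exact ContinuousLinearMap.norm_id_le

/-- Unitarity relation for the Cayley transform. -/
lemma aux_star_mul_self {N : ℕ} (Δ : Matrix (Fin N) (Fin N) ℂ) (hΔ : IsSelfAdjoint Δ) :
    star (cayleyTransform Δ) * cayleyTransform Δ = 1 := by
  set u := Δ + Complex.I • 1 with hu_def
  set v := Δ - Complex.I • 1 with hv_def
  have hu : IsUnit u := aux_isUnit Δ hΔ
  have hsu : star u = v := aux_star_add Δ hΔ
  have hv : IsUnit v := hsu ▸ hu.star
  have hud : IsUnit u.det := (Matrix.isUnit_iff_isUnit_det u).mp hu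
  have hvd : IsUnit v.det := (Matrix.isUnit_iff_isUnit_det v).mp hv
  have hsv : star v = u := by rw [← hsu, star_star]
  have hstarC : star (cayleyTransform Δ) = v⁻¹ * u := by
    rw [cayleyTransform, ← hu_def, ← hv_def, star_mul, Matrix.star_eq_conjTranspose u⁻¹,
      Matrix.conjTranspose_nonsing_inv, ← Matrix.star_eq_conjTranspose, hsu, hsv]
  rw [hstarC, cayleyTransform, ← hu_def, ← hv_def]
  calc v⁻¹ * u * (v * u⁻¹) = v⁻¹ * (u * v) * u⁻¹ := by simp only [mul_assoc]
    _ = v⁻¹ * (v * u) * u⁻¹ := by rw [aux_comm]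
    _ = (v⁻¹ * v) * (u * u⁻¹) := by simp only [mul_assoc]
    _ = 1 := by rw [Matrix.nonsing_inv_mul v hvd, Matrix.mul_nonsing_inv u hud, one_mul]

lemma aux_norm_cayley_le {N : ℕ} (Δ : Matrix (Fin N) (Fin N) ℂ) (hΔ : IsSelfAdjoint Δ) :
    ‖cayleyTransform Δ‖ ≤ 1 := by
  have h := Matrix.l2_opNorm_conjTranspose_mul_self (cayleyTransform Δ)
  rw [← Matrix.star_eq_conjTranspose, aux_star_mul_self Δ hΔ] at h
  have h1 : ‖(1 : Matrix (Fin N) (Fin N) ℂ)‖ ≤ 1 := aux_norm_one_le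
  nlinarith [norm_nonneg (cayleyTransform Δ)]

lemma aux_one_sub_cayley {N : ℕ} (Δ : Matrix (Fin N) (Fin N) ℂ) (hΔ : IsSelfAdjoint Δ) :
    (1 : Matrix (Fin N) (Fin N) ℂ) - cayleyTransform Δ =
      (2 * Complex.I) • (Δ + Complex.I • 1)⁻¹ := by
  have hu : IsUnit (Δ + Complex.I • 1) := aux_isUnit Δ hΔ
  have hud : IsUnit (Δ + Complex.I • 1).det := (Matrix.isUnit_iff_isUnit_det _).mp hu
  have huu : (Δ + Complex.I • 1) * (Δ + Complex.I • 1)⁻¹ = 1 := Matrix.mul_nonsing_inv _ hud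
  calc (1 : Matrix (Fin N) (Fin N) ℂ) - cayleyTransform Δ
      = (Δ + Complex.I • 1) * (Δ + Complex.I • 1)⁻¹ -
          (Δ - Complex.I • 1) * (Δ + Complex.I • 1)⁻¹ := by rw [huu, cayleyTransform]
    _ = ((Δ + Complex.I • 1) - (Δ - Complex.I • 1)) * (Δ + Complex.I • 1)⁻¹ :=
        (sub_mul _ _ _).symm
    _ = ((2 * Complex.I) • (1 : Matrix (Fin N) (Fin N) ℂ)) * (Δ + Complex.I • 1)⁻¹ := by
        congr 1
        module
    _ = (2 * Complex.I) • (Δ + Complex.I • 1)⁻¹ := by rw [smul_mul_assoc, one_mul]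

lemma aux_norm_inv_le {N : ℕ} (Δ : Matrix (Fin N) (Fin N) ℂ) (hΔ : IsSelfAdjoint Δ) :
    ‖(Δ + Complex.I • 1)⁻¹‖ ≤ 1 := by
  have key := aux_one_sub_cayley Δ hΔ
  have h2 : ‖(1 : Matrix (Fin N) (Fin N) ℂ) - cayleyTransform Δ‖ ≤ 2 := by
    refine (norm_sub_le _ _).trans ?_
    have := aux_norm_one_le (N := N)
    have := aux_norm_cayley_le Δ hΔ
    linarith
  rw [key, norm_smul] at h2
  have habs : ‖(2 * Complex.I : ℂ)‖ = 2 := by simp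
  rw [habs] at h2
  linarith

lemma aux_cayley_diff {N : ℕ} (Δ E : Matrix (Fin N) (Fin N) ℂ)
    (hΔ : IsSelfAdjoint Δ) (hΔ' : IsSelfAdjoint (Δ + E)) :
    ‖cayleyTransform Δ - cayleyTransform (Δ + E)‖ ≤ 2 * ‖E‖ := by
  set u := Δ + Complex.I • 1 with hu_def
  set u' := (Δ + E) + Complex.I • 1 with hu'_def
  have hu : IsUnit u := aux_isUnit Δ hΔ
  have hu' : IsUnit u' := aux_isUnit (Δ + E) hΔ'
  have hud : IsUnit u.det := (Matrix.isUnit_iff_isUnit_det _).mp hu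
  have hu'd : IsUnit u'.det := (Matrix.isUnit_iff_isUnit_det _).mp hu'
  have k1 := aux_one_sub_cayley Δ hΔ
  have k2 := aux_one_sub_cayley (Δ + E) hΔ'
  have key : cayleyTransform Δ - cayleyTransform (Δ + E) =
      (2 * Complex.I) • (u'⁻¹ - u⁻¹) := by
    have : cayleyTransform Δ - cayleyTransform (Δ + E) =
        ((1 : Matrix (Fin N) (Fin N) ℂ) - cayleyTransform (Δ + E)) -
          (1 - cayleyTransform Δ) := by abel
    rw [this, k1, k2, ← smul_sub]
  have resolvent : u'⁻¹ - u⁻¹ = u'⁻¹ * (-E) * u⁻¹ := by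
    have e1 : u'⁻¹ * (u * u⁻¹) = u'⁻¹ := by rw [Matrix.mul_nonsing_inv _ hud, mul_one]
    have e2 : (u'⁻¹ * u') * u⁻¹ = u⁻¹ := by rw [Matrix.nonsing_inv_mul _ hu'd, one_mul]
    calc u'⁻¹ - u⁻¹ = u'⁻¹ * (u * u⁻¹) - (u'⁻¹ * u') * u⁻¹ := by rw [e1, e2]
      _ = u'⁻¹ * (u - u') * u⁻¹ := by
          simp only [mul_sub, sub_mul, mul_assoc]
      _ = u'⁻¹ * (-E) * u⁻¹ := by
          congr 2
          rw [hu_def, hu'_def]; abel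
  rw [key, resolvent, norm_smul]
  have habs : ‖(2 * Complex.I : ℂ)‖ = 2 := by simp
  rw [habs]
  have h1 := aux_norm_inv_le Δ hΔ
  have h2 := aux_norm_inv_le (Δ + E) hΔ'
  have m1 : ‖u'⁻¹ * (-E) * u⁻¹‖ ≤ ‖u'⁻¹ * (-E)‖ * ‖u⁻¹‖ := norm_mul_le _ _
  have m2 : ‖u'⁻¹ * (-E)‖ ≤ ‖u'⁻¹‖ * ‖(-E)‖ := norm_mul_le _ _
  rw [norm_neg] at m2
  nlinarith [norm_nonneg E, norm_nonneg (u'⁻¹ * (-E)), norm_nonneg (u⁻¹ : Matrix (Fin N) (Fin N) ℂ), norm_nonneg (u'⁻¹ : Matrix (Fin N) (Fin N) ℂ)]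

lemma aux_pow_norm_le {N : ℕ} (A : Matrix (Fin N) (Fin N) ℂ) (hA : ‖A‖ ≤ 1) (l : ℕ) :
    ‖A ^ l‖ ≤ 1 := by
  induction l with
  | zero => simpa using aux_norm_one_le
  | succ n ih =>
    rw [pow_succ]
    refine (norm_mul_le _ _).trans ?_
    nlinarith [norm_nonneg (A ^ n)]

lemma aux_pow_diff {N : ℕ} (A B : Matrix (Fin N) (Fin N) ℂ)
    (hA : ‖A‖ ≤ 1) (hB : ‖B‖ ≤ 1) (l : ℕ) :
    ‖A ^ l - B ^ l‖ ≤ l * ‖A - B‖ := by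
  induction l with
  | zero => simp
  | succ n ih =>
    have key : A ^ (n + 1) - B ^ (n + 1) = A ^ n * (A - B) + (A ^ n - B ^ n) * B := by
      rw [pow_succ, pow_succ]; noncomm_ring
    rw [key]
    refine (norm_add_le _ _).trans ?_
    have m1 : ‖A ^ n * (A - B)‖ ≤ ‖A ^ n‖ * ‖A - B‖ := norm_mul_le _ _
    have m2 : ‖(A ^ n - B ^ n) * B‖ ≤ ‖A ^ n - B ^ n‖ * ‖B‖ := norm_mul_le _ _
    have hpn := aux_pow_norm_le A hA n
    push_cast
    nlinarith [norm_nonneg (A - B), norm_nonneg (A ^ n - B ^ n), norm_nonneg B,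
      norm_nonneg (A ^ n)]

/-- For self-adjoint `Δ` and `Δ' = Δ + E` with `‖E‖ < 1`, and a finite Cayley
filter `G(Δ) = ∑_{l=1}^L c_l C(Δ)^l`, one has
`‖G(Δ) - G(Δ')‖ ≤ (∑_{l=1}^L l |c_l|) ((‖Δ‖ + 1) ‖E‖ / (1 - ‖E‖) + ‖E‖)`. -/
theorem norm_cayley_filter_diff_le {N : ℕ} (Δ E : Matrix (Fin N) (Fin N) ℂ)
    (hΔ : IsSelfAdjoint Δ) (hΔ' : IsSelfAdjoint (Δ + E)) (hE : ‖E‖ < 1)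
    (L : ℕ) (c : ℕ → ℂ) :
    ‖(∑ l ∈ Finset.Icc 1 L, c l • cayleyTransform Δ ^ l) -
        ∑ l ∈ Finset.Icc 1 L, c l • cayleyTransform (Δ + E) ^ l‖ ≤
      (∑ l ∈ Finset.Icc 1 L, (l : ℝ) * ‖c l‖) *
        ((‖Δ‖ + 1) * (‖E‖ / (1 - ‖E‖)) + ‖E‖) := by
  set A := cayleyTransform Δ
  set B := cayleyTransform (Δ + E)
  set d : ℝ := (‖Δ‖ + 1) * (‖E‖ / (1 - ‖E‖)) + ‖E‖ with hd_def
  have hE0 : (0 : ℝ) ≤ ‖E‖ := norm_nonneg E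
  have h1E : (0 : ℝ) < 1 - ‖E‖ := by linarith
  have hquot : ‖E‖ ≤ ‖E‖ / (1 - ‖E‖) := by
    rw [le_div_iff₀ h1E]
    nlinarith
  have hΔ0 : (0 : ℝ) ≤ ‖Δ‖ := norm_nonneg Δ
  have hquot0 : (0 : ℝ) ≤ ‖E‖ / (1 - ‖E‖) := div_nonneg hE0 h1E.le
  have h2Ed : 2 * ‖E‖ ≤ d := by
    rw [hd_def]
    nlinarith
  have hd0 : 0 ≤ d := by linarith
  have hAB : ‖A - B‖ ≤ d := le_trans (aux_cayley_diff Δ E hΔ hΔ') h2Ed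
  have hA1 : ‖A‖ ≤ 1 := aux_norm_cayley_le Δ hΔ
  have hB1 : ‖B‖ ≤ 1 := aux_norm_cayley_le (Δ + E) hΔ'
  rw [← Finset.sum_sub_distrib]
  refine le_trans (norm_sum_le _ _) ?_
  rw [Finset.sum_mul]
  apply Finset.sum_le_sum
  intro l _
  rw [← smul_sub, norm_smul]
  have h3 : ‖A ^ l - B ^ l‖ ≤ l * d :=
    (aux_pow_diff A B hA1 hB1 l).trans
      (mul_le_mul_of_nonneg_left hAB (Nat.cast_nonneg l))
  calc ‖c l‖ * ‖A ^ l - B ^ l‖ ≤ ‖c l‖ * (l * d) :=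
        mul_le_mul_of_nonneg_left h3 (norm_nonneg _)
    _ = (l : ℝ) * ‖c l‖ * d := by ring
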